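/- Let ρ > 0, let t₀ > 0, and let Q₁, …, Q_k : [t₀, ∞) → ℝ be differentiable nonnegative functions satisfying Q₁'(t) ≤ −(ρ/t)·Q₁(t) and Q_i'(t) ≤ −(ρ/t)·(Q_i(t) − Q_{i−1}(t)) for 2 ≤ i ≤ k and all t ≥ t₀. Define V(t) = ∑_{i=1}^k Q_i(t)². Then for all t ≥ t₀, V'(t) ≤ −(2ρ/t)·( Q₁(t)² + ∑_{i=2}^k Q_i(t)·(Q_i(t) − Q_{i−1}(t)) ), and moreover V'(t) ≤ 0. -/

import Mathlib

lemma aux_half (a : ℕ → ℝ) :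
    ∀ k : ℕ, 1 ≤ k →
      a k ^ 2 / 2 ≤ a 1 ^ 2 + ∑ i ∈ Finset.Icc 2 k, a i * (a i - a (i - 1)) := by
  intro k hk
  induction k, hk using Nat.le_induction with
  | base => simp; nlinarith [sq_nonneg (a 1)]
  | succ n hn ih =>
    rw [← Finset.Ico_add_one_right_eq_Icc, Finset.sum_Ico_succ_top (by omega), Finset.Ico_add_one_right_eq_Icc]
    have : (n + 1 - 1) = n := by omega
    rw [this]
    nlinarith [sq_nonneg (a n - a (n + 1))]

/-- The Lyapunov argument of Section 5.2 of the paper: for nonnegative differentiable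
`Q₁, …, Q_k` with `Q₁' ≤ −(ρ/t)Q₁` and `Q_i' ≤ −(ρ/t)(Q_i − Q_{i−1})` on `[t₀, ∞)`, the
Lyapunov function `V = ∑ Q_i²` satisfies
`V'(t) ≤ −(2ρ/t)(Q₁(t)² + ∑_{i=2}^k Q_i(t)(Q_i(t) − Q_{i−1}(t))) ≤ 0`. -/
theorem stmt_15 (k : ℕ) (hk : 1 ≤ k) (ρ t₀ : ℝ) (hρ : 0 < ρ) (ht₀ : 0 < t₀)
    (Q : ℕ → ℝ → ℝ)
    (hnonneg : ∀ i : ℕ, 1 ≤ i → i ≤ k → ∀ t : ℝ, t₀ ≤ t → 0 ≤ Q i t)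
    (hdiff : ∀ i : ℕ, 1 ≤ i → i ≤ k → ∀ t : ℝ, t₀ ≤ t → DifferentiableAt ℝ (Q i) t)
    (hderiv1 : ∀ t : ℝ, t₀ ≤ t → deriv (Q 1) t ≤ -(ρ / t) * Q 1 t)
    (hderivi : ∀ i : ℕ, 2 ≤ i → i ≤ k → ∀ t : ℝ, t₀ ≤ t →
      deriv (Q i) t ≤ -(ρ / t) * (Q i t - Q (i - 1) t))
    (V : ℝ → ℝ)
    (hV : ∀ t : ℝ, V t = ∑ i ∈ Finset.Icc 1 k, (Q i t) ^ 2) :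
    ∀ t : ℝ, t₀ ≤ t →
      deriv V t ≤ -(2 * ρ / t) *
          (Q 1 t ^ 2 + ∑ i ∈ Finset.Icc 2 k, Q i t * (Q i t - Q (i - 1) t)) ∧
      deriv V t ≤ 0 := by
  intro t ht
  have htpos : 0 < t := lt_of_lt_of_le ht₀ ht
  have hVfun : V = fun s => ∑ i ∈ Finset.Icc 1 k, (Q i s) ^ 2 := funext hV
  -- derivative of V
  have hDV : deriv V t = ∑ i ∈ Finset.Icc 1 k, 2 * Q i t * deriv (Q i) t := by
    rw [hVfun]
    have h : HasDerivAt (fun s => ∑ i ∈ Finset.Icc 1 k, (Q i s) ^ 2)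
        (∑ i ∈ Finset.Icc 1 k, 2 * Q i t * deriv (Q i) t) t := by
      apply HasDerivAt.fun_sum
      intro i hi
      simp only [Finset.mem_Icc] at hi
      have hd := (hdiff i hi.1 hi.2 t ht).hasDerivAt
      have := hd.fun_pow 2
      simpa [mul_comm, mul_assoc] using this
    exact h.deriv
  have hsplit : Finset.Icc 1 k = insert 1 (Finset.Icc 2 k) := by
    ext x; simp [Finset.mem_Icc]; omega
  have h1notin : (1 : ℕ) ∉ Finset.Icc 2 k := by simp
  have hbound : deriv V t ≤ -(2 * ρ / t) *
      (Q 1 t ^ 2 + ∑ i ∈ Finset.Icc 2 k, Q i t * (Q i t - Q (i - 1) t)) := by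
    rw [hDV, hsplit, Finset.sum_insert h1notin]
    have hterm1 : 2 * Q 1 t * deriv (Q 1) t ≤ -(2 * ρ / t) * (Q 1 t ^ 2) := by
      have hq := hnonneg 1 le_rfl hk t ht
      have h := mul_le_mul_of_nonneg_left (hderiv1 t ht) (by linarith : (0:ℝ) ≤ 2 * Q 1 t)
      calc 2 * Q 1 t * deriv (Q 1) t ≤ 2 * Q 1 t * (-(ρ / t) * Q 1 t) := h
        _ = -(2 * ρ / t) * (Q 1 t ^ 2) := by ring
    have htermi : ∀ i ∈ Finset.Icc 2 k,
        2 * Q i t * deriv (Q i) t ≤ -(2 * ρ / t) * (Q i t * (Q i t - Q (i - 1) t)) := by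
      intro i hi
      simp only [Finset.mem_Icc] at hi
      have hq := hnonneg i (by omega) hi.2 t ht
      have h := mul_le_mul_of_nonneg_left (hderivi i hi.1 hi.2 t ht)
        (by linarith : (0:ℝ) ≤ 2 * Q i t)
      calc 2 * Q i t * deriv (Q i) t ≤ 2 * Q i t * (-(ρ / t) * (Q i t - Q (i - 1) t)) := h
        _ = -(2 * ρ / t) * (Q i t * (Q i t - Q (i - 1) t)) := by ring
    calc 2 * Q 1 t * deriv (Q 1) t + ∑ i ∈ Finset.Icc 2 k, 2 * Q i t * deriv (Q i) t
        ≤ -(2 * ρ / t) * (Q 1 t ^ 2) +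
          ∑ i ∈ Finset.Icc 2 k, -(2 * ρ / t) * (Q i t * (Q i t - Q (i - 1) t)) :=
          add_le_add hterm1 (Finset.sum_le_sum htermi)
      _ = -(2 * ρ / t) *
          (Q 1 t ^ 2 + ∑ i ∈ Finset.Icc 2 k, Q i t * (Q i t - Q (i - 1) t)) := by
          rw [← Finset.mul_sum]; ring
  refine ⟨hbound, le_trans hbound ?_⟩
  have hposbr : 0 ≤ Q 1 t ^ 2 + ∑ i ∈ Finset.Icc 2 k, Q i t * (Q i t - Q (i - 1) t) := by
    have := aux_half (fun i => Q i t) k hk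
    have hqk := sq_nonneg (Q k t)
    nlinarith
  have : 0 ≤ 2 * ρ / t := by positivity
  nlinarith
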